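/- Let F denote the closed unit ball of the generalized Barron space B_{X,K}. Then for every finite sample set S = {x_1,…,x_N} ⊆ K, the Rademacher complexity satisfies Rad(F; S) ≤ 2 · Rad(B^X; S), where B^X is the closed unit ball of X. -/

import Mathlib

open MeasureTheory Set Filter Topology
open scoped ENNReal NNReal Classical

noncomputable section

/-- The rectified linear unit. -/
def relu (z : ℝ) : ℝ := max z 0

/-- The Borel σ-algebra on `C(K, ℝ)` for the topology of uniform convergence
(= compact-open topology for compact `K`). -/
instance ctsMeasurableSpace {d : ℕ} (K : Set (Fin d → ℝ)) : MeasurableSpace C(K, ℝ) := borel _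

/-- `(μp, μn)` is a (Jordan-decomposed) signed-measure representation of `f` over the
class `H ⊆ C(K, ℝ)`: both parts are finite measures concentrated on `H`, and
`f x = ∫ relu (g x) dμp - ∫ relu (g x) dμn` for every `x ∈ K`. -/
def IsBarronRep {d : ℕ} (K : Set (Fin d → ℝ)) (H : Set C(K, ℝ)) (f : C(K, ℝ))
    (μp μn : Measure C(K, ℝ)) : Prop :=
  IsFiniteMeasure μp ∧ IsFiniteMeasure μn ∧ μp Hᶜ = 0 ∧ μn Hᶜ = 0 ∧
    ∀ x : K, f x = (∫ g : C(K, ℝ), relu (g x) ∂μp) - ∫ g : C(K, ℝ), relu (g x) ∂μn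

/-- The generalized Barron norm `‖f‖_{X,K}`, where `H` plays the role of the closed unit
ball `B^X` (realized inside `C(K,ℝ)`): the infimum of the total variation mass over all
signed-measure representations of `f`. -/
def barronNorm {d : ℕ} (K : Set (Fin d → ℝ)) (H : Set C(K, ℝ)) (f : C(K, ℝ)) : ℝ≥0∞ :=
  ⨅ p : {p : Measure C(K, ℝ) × Measure C(K, ℝ) // IsBarronRep K H f p.1 p.2},
    p.1.1 Set.univ + p.1.2 Set.univ

/-- The Rademacher complexity `Rad(H; S) = E_ξ [ sup_{h ∈ H} (1/N) Σᵢ ξᵢ h(xᵢ) ]`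
of a class `H` of real-valued functions on a sample `S = (x_1, …, x_N)`, where the `ξᵢ`
are i.i.d. uniform random signs (the expectation is the average over all `2^N` sign
patterns); valued in `EReal` to handle unbounded classes. -/
def rademacher {α : Type*} {N : ℕ} (H : Set (α → ℝ)) (S : Fin N → α) : EReal :=
  (((2 ^ N : ℝ)⁻¹ : ℝ) : EReal) *
    ∑ ξ : Fin N → Bool,
      ⨆ h ∈ H, ((((N : ℝ))⁻¹ * ∑ i : Fin N, (if ξ i then (1 : ℝ) else -1) * h (S i) : ℝ) : EReal)

end

noncomputable section

namespace RadAux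

def sg (b : Bool) : ℝ := if b then 1 else -1

lemma abs_sg (b : Bool) : |sg b| = 1 := by cases b <;> simp [sg]

lemma sg_not (b : Bool) : sg (!b) = - sg b := by cases b <;> simp [sg]

lemma abs_relu_le (z : ℝ) : |relu z| ≤ |z| := by
  rw [relu, abs_of_nonneg (le_max_right z 0)]
  exact max_le (le_abs_self z) (abs_nonneg z)

lemma relu_lip (a b : ℝ) : |relu a - relu b| ≤ |a - b| := abs_max_sub_max_le_abs a b 0

lemma relu_const_mul {c : ℝ} (hc : 0 ≤ c) (z : ℝ) : relu (c * z) = c * relu z := by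
  rw [relu, relu, mul_max_of_nonneg _ _ hc, mul_zero]

variable {N : ℕ}

lemma bddAbove_val (T : Set (Fin N → ℝ)) (Cb : ℝ) (hT : ∀ t ∈ T, ∀ i, |t i| ≤ Cb)
    (ψ : Fin N → ℝ → ℝ) (hψ : ∀ i z, |ψ i z| ≤ |z|) (ξ : Fin N → Bool) :
    BddAbove ((fun t => ∑ i, sg (ξ i) * ψ i (t i)) '' T) := by
  refine ⟨(N : ℝ) * Cb, ?_⟩
  rintro x ⟨t, ht, rfl⟩
  calc ∑ i, sg (ξ i) * ψ i (t i) ≤ ∑ _i : Fin N, Cb := by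
        refine Finset.sum_le_sum fun i _ => ?_
        calc sg (ξ i) * ψ i (t i) ≤ |sg (ξ i) * ψ i (t i)| := le_abs_self _
          _ = |ψ i (t i)| := by rw [abs_mul, abs_sg, one_mul]
          _ ≤ |t i| := hψ i (t i)
          _ ≤ Cb := hT t ht i
    _ = (N : ℝ) * Cb := by simp [Finset.sum_const, mul_comm]

end RadAux
section
variable {N : ℕ}
open RadAux

lemma contraction_step (T : Set (Fin N → ℝ)) (hne : T.Nonempty) (Cb : ℝ)
    (hT : ∀ t ∈ T, ∀ i, |t i| ≤ Cb) (A : Finset (Fin N)) (a : Fin N) (ha : a ∉ A) :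
    ∑ ξ : Fin N → Bool,
        sSup ((fun t => ∑ i, sg (ξ i) * (if i ∈ insert a A then relu (t i) else t i)) '' T)
      ≤ ∑ ξ : Fin N → Bool,
        sSup ((fun t => ∑ i, sg (ξ i) * (if i ∈ A then relu (t i) else t i)) '' T) := by
  classical
  set val : Finset (Fin N) → (Fin N → Bool) → (Fin N → ℝ) → ℝ :=
    fun B ξ t => ∑ i, sg (ξ i) * (if i ∈ B then relu (t i) else t i) with hval
  set flip : (Fin N → Bool) → (Fin N → Bool) := fun ξ => Function.update ξ a (!ξ a) with hflip
  have hflipinv : Function.Involutive flip := by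
    intro ξ; funext i
    by_cases h : i = a
    · subst h; simp [hflip]
    · simp [hflip, Function.update_of_ne h]
  have hsum : ∀ G : (Fin N → Bool) → ℝ, ∑ ξ, G (flip ξ) = ∑ ξ, G ξ :=
    fun G => Fintype.sum_bijective flip hflipinv.bijective _ _ (fun ξ => rfl)
  -- pointwise pair inequality
  have key : ∀ ξ : Fin N → Bool,
      sSup (val (insert a A) ξ '' T) + sSup (val (insert a A) (flip ξ) '' T)
        ≤ sSup (val A ξ '' T) + sSup (val A (flip ξ) '' T) := by
    intro ξ
    set e : ℝ := sg (ξ a) with he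
    set base : (Fin N → ℝ) → ℝ :=
      fun t => ∑ i ∈ ({a}ᶜ : Finset (Fin N)), sg (ξ i) * (if i ∈ A then relu (t i) else t i)
      with hbase
    have habs_e : |e| = 1 := abs_sg _
    have hbase_flip : ∀ B : Finset (Fin N), ∀ t : Fin N → ℝ,
        ∑ i ∈ ({a}ᶜ : Finset (Fin N)), sg (flip ξ i) * (if i ∈ B then relu (t i) else t i)
          = ∑ i ∈ ({a}ᶜ : Finset (Fin N)), sg (ξ i) * (if i ∈ B then relu (t i) else t i) := by
      intro B t
      refine Finset.sum_congr rfl fun i hi => ?_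
      have hia : i ≠ a := by simpa using hi
      simp [hflip, Function.update_of_ne hia]
    have hdec : ∀ (B : Finset (Fin N)) (η : Fin N → Bool) (t : Fin N → ℝ),
        val B η t = sg (η a) * (if a ∈ B then relu (t a) else t a)
          + ∑ i ∈ ({a}ᶜ : Finset (Fin N)), sg (η i) * (if i ∈ B then relu (t i) else t i) := by
      intro B η t
      exact Fintype.sum_eq_add_sum_compl a _
    have hhead : sg (flip ξ a) = -e := by
      show sg (Function.update ξ a (!ξ a) a) = -e
      rw [Function.update_self, sg_not, he]
    have htail : ∀ t : Fin N → ℝ,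
        ∑ i ∈ ({a}ᶜ : Finset (Fin N)), sg (ξ i) * (if i ∈ insert a A then relu (t i) else t i)
          = base t := by
      intro t
      refine Finset.sum_congr rfl fun i hi => ?_
      have hia : i ≠ a := by simpa using hi
      simp [Finset.mem_insert, hia]
    have hd1 : ∀ t, val (insert a A) ξ t = e * relu (t a) + base t := by
      intro t
      rw [hdec, if_pos (Finset.mem_insert_self a A), htail, he]
    have hd2 : ∀ t, val (insert a A) (flip ξ) t = -e * relu (t a) + base t := by
      intro t
      rw [hdec, if_pos (Finset.mem_insert_self a A), hbase_flip, htail, hhead]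
    have hd3 : ∀ t, val A ξ t = e * t a + base t := by
      intro t
      rw [hdec, if_neg ha, he, hbase]
    have hd4 : ∀ t, val A (flip ξ) t = -e * t a + base t := by
      intro t
      rw [hdec, if_neg ha, hbase_flip, hhead, hbase]
    have hbdd3 : BddAbove (val A ξ '' T) := by
      refine bddAbove_val T Cb hT (fun i z => if i ∈ A then relu z else z) ?_ ξ
      intro i z; by_cases h : i ∈ A <;> simp [h, abs_relu_le]
    have hbdd4 : BddAbove (val A (flip ξ) '' T) := by
      refine bddAbove_val T Cb hT (fun i z => if i ∈ A then relu z else z) ?_ (flip ξ)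
      intro i z; by_cases h : i ∈ A <;> simp [h, abs_relu_le]
    have key2 : ∀ s ∈ T, ∀ t ∈ T,
        val (insert a A) ξ s + val (insert a A) (flip ξ) t
          ≤ sSup (val A ξ '' T) + sSup (val A (flip ξ) '' T) := by
      intro s hs t ht
      rw [hd1, hd2]
      have hlip : e * relu (s a) + -e * relu (t a) ≤ |s a - t a| := by
        calc e * relu (s a) + -e * relu (t a) = e * (relu (s a) - relu (t a)) := by ring
          _ ≤ |e * (relu (s a) - relu (t a))| := le_abs_self _
          _ = |relu (s a) - relu (t a)| := by rw [abs_mul, habs_e, one_mul]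
          _ ≤ |s a - t a| := relu_lip _ _
      rcases le_total (e * t a) (e * s a) with h | h
      · have habs : |s a - t a| = e * s a + -e * t a := by
          have : |s a - t a| = |e * s a - e * t a| := by
            rw [← mul_sub, abs_mul, habs_e, one_mul]
          rw [this, abs_of_nonneg (by linarith)]; ring
        have m1 : e * s a + base s ≤ sSup (val A ξ '' T) := by
          have := le_csSup hbdd3 ⟨s, hs, (hd3 s)⟩
          simpa [hd3 s] using this
        have m2 : -e * t a + base t ≤ sSup (val A (flip ξ) '' T) := by
          have := le_csSup hbdd4 ⟨t, ht, (hd4 t)⟩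
          simpa [hd4 t] using this
        nlinarith [hlip, habs, m1, m2]
      · have habs : |s a - t a| = e * t a + -e * s a := by
          have h1 : |s a - t a| = |e * s a - e * t a| := by
            rw [← mul_sub, abs_mul, habs_e, one_mul]
          rw [h1, abs_of_nonpos (by linarith)]; ring
        have m1 : e * t a + base t ≤ sSup (val A ξ '' T) := by
          have := le_csSup hbdd3 ⟨t, ht, (hd3 t)⟩
          simpa [hd3 t] using this
        have m2 : -e * s a + base s ≤ sSup (val A (flip ξ) '' T) := by
          have := le_csSup hbdd4 ⟨s, hs, (hd4 s)⟩
          simpa [hd4 s] using this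
        nlinarith [hlip, habs, m1, m2]
    have hne1 : (val (insert a A) ξ '' T).Nonempty := hne.image _
    have hne2 : (val (insert a A) (flip ξ) '' T).Nonempty := hne.image _
    have h1 : sSup (val (insert a A) ξ '' T)
        ≤ (sSup (val A ξ '' T) + sSup (val A (flip ξ) '' T))
          - sSup (val (insert a A) (flip ξ) '' T) := by
      refine csSup_le hne1 ?_
      rintro x ⟨s, hs, rfl⟩
      rw [le_sub_iff_add_le]
      have h2 : sSup (val (insert a A) (flip ξ) '' T)
          ≤ (sSup (val A ξ '' T) + sSup (val A (flip ξ) '' T)) - val (insert a A) ξ s := by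
        refine csSup_le hne2 ?_
        rintro y ⟨t, ht, rfl⟩
        have := key2 s hs t ht
        linarith
      linarith
    linarith
  have h2 : ∀ B : Finset (Fin N),
      (2 : ℝ) * ∑ ξ : Fin N → Bool, sSup (val B ξ '' T)
        = ∑ ξ : Fin N → Bool, (sSup (val B ξ '' T) + sSup (val B (flip ξ) '' T)) := by
    intro B
    rw [Finset.sum_add_distrib, hsum (fun ξ => sSup (val B ξ '' T))]
    ring
  have := Finset.sum_le_sum (fun ξ (_ : ξ ∈ Finset.univ) => key ξ)
  have h3 := h2 (insert a A)
  have h4 := h2 A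
  linarith

lemma contraction (T : Set (Fin N → ℝ)) (hne : T.Nonempty) (Cb : ℝ)
    (hT : ∀ t ∈ T, ∀ i, |t i| ≤ Cb) :
    ∑ ξ : Fin N → Bool, sSup ((fun t => ∑ i, sg (ξ i) * relu (t i)) '' T)
      ≤ ∑ ξ : Fin N → Bool, sSup ((fun t => ∑ i, sg (ξ i) * t i) '' T) := by
  classical
  have main : ∀ A : Finset (Fin N),
      ∑ ξ : Fin N → Bool, sSup ((fun t => ∑ i, sg (ξ i) * (if i ∈ A then relu (t i) else t i)) '' T)
        ≤ ∑ ξ : Fin N → Bool, sSup ((fun t => ∑ i, sg (ξ i) * t i) '' T) := by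
    intro A
    induction A using Finset.induction with
    | empty => simp
    | insert a A ha ih =>
        exact le_trans (contraction_step T hne Cb hT _ _ ha) ih
  have := main Finset.univ
  simpa using this
end
section
lemma ereal_coe_sum {ι : Type*} (s : Finset ι) (f : ι → ℝ) :
    ((∑ i ∈ s, f i : ℝ) : EReal) = ∑ i ∈ s, ((f i : ℝ) : EReal) :=
  map_sum (⟨⟨(Real.toEReal), EReal.coe_zero⟩, EReal.coe_add⟩ : ℝ →+ EReal) f s

lemma ereal_biSup_eq {α : Type*} (s : Set α) (f : α → ℝ) (hne : s.Nonempty) (B : ℝ)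
    (hbd : ∀ x ∈ s, f x ≤ B) :
    (⨆ x ∈ s, ((f x : ℝ) : EReal)) = ((sSup (f '' s) : ℝ) : EReal) := by
  have hbdd : BddAbove (f '' s) := ⟨B, by rintro y ⟨x, hx, rfl⟩; exact hbd x hx⟩
  apply le_antisymm
  · refine iSup₂_le fun x hx => ?_
    exact EReal.coe_le_coe_iff.2 (le_csSup hbdd ⟨x, hx, rfl⟩)
  · obtain ⟨x₀, hx₀⟩ := hne
    set M := ⨆ x ∈ s, ((f x : ℝ) : EReal) with hM
    have hle : ∀ x ∈ s, ((f x : ℝ) : EReal) ≤ M := fun x hx => le_iSup₂ (f := fun x _ => ((f x : ℝ) : EReal)) x hx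
    by_cases htop : M = ⊤
    · rw [htop]; exact le_top
    · have hbot : M ≠ ⊥ := fun h => by
        have := hle x₀ hx₀; rw [h] at this; exact absurd this (not_le.2 (EReal.bot_lt_coe _))
      have hcoe : ((M.toReal : ℝ) : EReal) = M := EReal.coe_toReal htop hbot
      have : sSup (f '' s) ≤ M.toReal := by
        refine csSup_le ⟨f x₀, ⟨x₀, hx₀, rfl⟩⟩ ?_
        rintro y ⟨x, hx, rfl⟩
        have := hle x hx
        rw [← hcoe] at this
        exact EReal.coe_le_coe_iff.1 this
      calc ((sSup (f '' s) : ℝ) : EReal) ≤ ((M.toReal : ℝ) : EReal) := EReal.coe_le_coe_iff.2 this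
        _ = M := hcoe
end

end
open RadAux in
/-- Let `F` be the closed unit ball of the generalized Barron space
`B_{X,K}` (viewed as a class of functions on `K`).  For every finite sample `S ⊆ K`,
`Rad(F; S) ≤ 2 · Rad(B^X; S)`, where `B^X` is the closed unit ball of `X` (realized as
functions on `K` via `ι`). -/
theorem rademacher_barron_le {d : ℕ} (K : Set (Fin d → ℝ)) (hK : IsCompact K)
    {X : Type} [NormedAddCommGroup X] [NormedSpace ℝ X] [CompleteSpace X]
    (ι : X →ₗ[ℝ] C(K, ℝ)) (hinj : Function.Injective ι)
    (C₁ C₂ : ℝ) (hC₁pos : 0 < C₁) (hC₂pos : 0 < C₂)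
    (hC₁ : ∀ (g : X) (x : K), |ι g x| ≤ C₁ * ‖g‖)
    (hC₂ : ∀ (g : X) (x y : K), |ι g x - ι g y| ≤ C₂ * ‖g‖ * dist x y)
    (hball : IsClosed (ι '' Metric.closedBall (0 : X) 1))
    {N : ℕ} (S : Fin N → K) :
    rademacher {h : K → ℝ | ∃ f : C(K, ℝ),
        barronNorm K (ι '' Metric.closedBall (0 : X) 1) f ≤ 1 ∧ h = ⇑f} S
      ≤ ((2 : ℝ) : EReal) * rademacher {h : K → ℝ | ∃ g : X, ‖g‖ ≤ 1 ∧ h = ⇑(ι g)} S := by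
  classical
  haveI : BorelSpace C(K, ℝ) := ⟨rfl⟩
  set H : Set C(K, ℝ) := ι '' Metric.closedBall (0 : X) 1 with hH
  set cN : ℝ := (N : ℝ)⁻¹ with hcNdef
  have hcN : 0 ≤ cN := inv_nonneg.2 (Nat.cast_nonneg N)
  set T : Set (Fin N → ℝ) := (fun g : X => fun i => cN * (ι g (S i))) '' Metric.closedBall (0:X) 1
    with hTdef
  have hTne : T.Nonempty := ⟨_, ⟨0, Metric.mem_closedBall_self zero_le_one, rfl⟩⟩
  have hTbd : ∀ t ∈ T, ∀ i, |t i| ≤ cN * C₁ := by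
    rintro t ⟨g, hg, rfl⟩ i
    have hgn : ‖g‖ ≤ 1 := mem_closedBall_zero_iff.1 hg
    calc |cN * ι g (S i)| = cN * |ι g (S i)| := by rw [abs_mul, abs_of_nonneg hcN]
      _ ≤ cN * (C₁ * ‖g‖) := mul_le_mul_of_nonneg_left (hC₁ g (S i)) hcN
      _ ≤ cN * C₁ := by nlinarith [mul_nonneg (mul_nonneg hcN hC₁pos.le) (sub_nonneg.2 hgn)]
  set Tsup : (Fin N → Bool) → ℝ :=
    fun ξ : Fin N → Bool => sSup ((fun t => ∑ i, sg (ξ i) * relu (t i)) '' T) with hTsup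
  set Rsup : (Fin N → Bool) → ℝ :=
    fun ξ : Fin N → Bool => sSup ((fun t => ∑ i, sg (ξ i) * t i) '' T) with hRsup
  have hbddT : ∀ ξ : Fin N → Bool, BddAbove ((fun t => ∑ i, sg (ξ i) * relu (t i)) '' T) :=
    fun ξ => bddAbove_val T (cN * C₁) hTbd (fun _ => relu) (fun _ => abs_relu_le) ξ
  have hzeroT : (fun i : Fin N => cN * (ι (0 : X) (S i))) ∈ T :=
    ⟨0, Metric.mem_closedBall_self zero_le_one, rfl⟩
  have hzeroT' : ∀ i : Fin N, cN * (ι (0 : X) (S i)) = 0 := by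
    intro i; simp [map_zero ι]
  have hTsup_nonneg : ∀ ξ, 0 ≤ Tsup ξ := by
    intro ξ
    have hmem : (0 : ℝ) ∈ (fun t => ∑ i, sg (ξ i) * relu (t i)) '' T := by
      refine ⟨_, hzeroT, ?_⟩
      simp only [hzeroT']
      simp [relu]
    exact le_csSup (hbddT ξ) hmem
  -- the key per-function bound
  have keybound : ∀ (ξ : Fin N → Bool) (f : C(K, ℝ)), barronNorm K H f ≤ 1 →
      cN * ∑ i, sg (ξ i) * f (S i) ≤ Tsup ξ + Tsup (fun i => !ξ i) := by
    intro ξ f hf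
    set D : ℝ := Tsup ξ + Tsup (fun i => !ξ i) with hD
    have hD0 : 0 ≤ D := add_nonneg (hTsup_nonneg _) (hTsup_nonneg _)
    refine le_of_forall_pos_le_add ?_
    intro δ hδ
    set ε : ℝ := δ / (D + 1) with hεdef
    have hε : 0 < ε := div_pos hδ (by linarith)
    have h1 : barronNorm K H f < 1 + ENNReal.ofReal ε :=
      lt_of_le_of_lt hf (ENNReal.lt_add_right ENNReal.one_ne_top
        (by simp [ENNReal.ofReal_pos.2 hε, (ENNReal.ofReal_pos.2 hε).ne']))
    rw [barronNorm] at h1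
    obtain ⟨⟨⟨μp, μn⟩, hrep⟩, hlt⟩ := iInf_lt_iff.1 h1
    obtain ⟨hfp, hfn, hp0, hn0, heq⟩ := hrep
    haveI := hfp; haveI := hfn
    have hmass : (μp Set.univ).toReal + (μn Set.univ).toReal ≤ 1 + ε := by
      have h2 : μp Set.univ + μn Set.univ ≤ 1 + ENNReal.ofReal ε := hlt.le
      calc (μp Set.univ).toReal + (μn Set.univ).toReal
          = (μp Set.univ + μn Set.univ).toReal :=
            (ENNReal.toReal_add (measure_ne_top _ _) (measure_ne_top _ _)).symm
        _ ≤ (1 + ENNReal.ofReal ε).toReal := by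
            refine ENNReal.toReal_mono ?_ h2
            exact ENNReal.add_ne_top.2 ⟨ENNReal.one_ne_top, ENNReal.ofReal_ne_top⟩
        _ = 1 + ε := by
            rw [ENNReal.toReal_add ENNReal.one_ne_top ENNReal.ofReal_ne_top,
              ENNReal.toReal_one, ENNReal.toReal_ofReal hε.le]
    have haeP : ∀ᵐ g ∂μp, g ∈ H := by
      rw [MeasureTheory.ae_iff]
      exact hp0
    have haeN : ∀ᵐ g ∂μn, g ∈ H := by
      rw [MeasureTheory.ae_iff]
      exact hn0
    have hwcont : ∀ x : K, Continuous fun g : C(K, ℝ) => relu (g x) := by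
      intro x
      exact (continuous_id.max continuous_const).comp (continuous_eval_const x)
    have hbnd : ∀ g ∈ H, ∀ x : K, ‖relu (g x)‖ ≤ C₁ := by
      rintro g ⟨g₀, hg₀, rfl⟩ x
      have hgn : ‖g₀‖ ≤ 1 := mem_closedBall_zero_iff.1 hg₀
      rw [Real.norm_eq_abs]
      calc |relu (ι g₀ x)| ≤ |ι g₀ x| := abs_relu_le _
        _ ≤ C₁ * ‖g₀‖ := hC₁ g₀ x
        _ ≤ C₁ := by nlinarith
    have hintp : ∀ x : K, Integrable (fun g : C(K, ℝ) => relu (g x)) μp := by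
      intro x
      refine ⟨(hwcont x).aestronglyMeasurable, ?_⟩
      refine MeasureTheory.HasFiniteIntegral.of_bounded (C := C₁) ?_
      filter_upwards [haeP] with g hg using hbnd g hg x
    have hintn : ∀ x : K, Integrable (fun g : C(K, ℝ) => relu (g x)) μn := by
      intro x
      refine ⟨(hwcont x).aestronglyMeasurable, ?_⟩
      refine MeasureTheory.HasFiniteIntegral.of_bounded (C := C₁) ?_
      filter_upwards [haeN] with g hg using hbnd g hg x
    set U : C(K, ℝ) → ℝ := fun g => ∑ i, sg (ξ i) * (cN * relu (g (S i))) with hU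
    have hUintp : Integrable U μp :=
      integrable_finset_sum _ fun i _ => (((hintp (S i)).const_mul cN).const_mul (sg (ξ i)))
    have hUintn : Integrable U μn :=
      integrable_finset_sum _ fun i _ => (((hintn (S i)).const_mul cN).const_mul (sg (ξ i)))
    have hval : cN * ∑ i, sg (ξ i) * f (S i) = (∫ g, U g ∂μp) - ∫ g, U g ∂μn := by
      rw [hU, integral_finset_sum _ (fun i _ => (((hintp (S i)).const_mul cN).const_mul (sg (ξ i)))),
        integral_finset_sum _ (fun i _ => (((hintn (S i)).const_mul cN).const_mul (sg (ξ i))))]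
      simp only [MeasureTheory.integral_const_mul]
      rw [Finset.mul_sum, ← Finset.sum_sub_distrib]
      refine Finset.sum_congr rfl fun i _ => ?_
      rw [heq (S i)]
      ring
    have hUleP : ∀ᵐ g ∂μp, U g ≤ Tsup ξ := by
      filter_upwards [haeP] with g hg
      obtain ⟨g₀, hg₀, rfl⟩ := hg
      have hUval : U (ι g₀) = ∑ i, sg (ξ i) * relu (cN * (ι g₀ (S i))) := by
        rw [hU]
        exact Finset.sum_congr rfl fun i _ => by rw [relu_const_mul hcN]
      rw [hUval]
      exact le_csSup (hbddT ξ) ⟨_, ⟨g₀, hg₀, rfl⟩, rfl⟩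
    have hUleN : ∀ᵐ g ∂μn, -U g ≤ Tsup (fun i => !ξ i) := by
      filter_upwards [haeN] with g hg
      obtain ⟨g₀, hg₀, rfl⟩ := hg
      have hUval : -U (ι g₀) = ∑ i, sg (!ξ i) * relu (cN * (ι g₀ (S i))) := by
        rw [hU, ← Finset.sum_neg_distrib]
        exact Finset.sum_congr rfl fun i _ => by rw [relu_const_mul hcN, sg_not]; ring
      rw [hUval]
      exact le_csSup (hbddT _) ⟨_, ⟨g₀, hg₀, rfl⟩, rfl⟩
    have hIp : (∫ g, U g ∂μp) ≤ Tsup ξ * (μp Set.univ).toReal := by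
      calc (∫ g, U g ∂μp) ≤ ∫ _, Tsup ξ ∂μp := integral_mono_ae hUintp (integrable_const _) hUleP
        _ = (μp Set.univ).toReal • Tsup ξ := integral_const _
        _ = Tsup ξ * (μp Set.univ).toReal := by rw [smul_eq_mul]; ring
    have hIn : -(∫ g, U g ∂μn) ≤ Tsup (fun i => !ξ i) * (μn Set.univ).toReal := by
      rw [← integral_neg]
      calc (∫ g, -U g ∂μn) ≤ ∫ _, Tsup (fun i => !ξ i) ∂μn :=
            integral_mono_ae hUintn.neg (integrable_const _) hUleN
        _ = (μn Set.univ).toReal • Tsup (fun i => !ξ i) := integral_const _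
        _ = Tsup (fun i => !ξ i) * (μn Set.univ).toReal := by rw [smul_eq_mul]; ring
    have hεD : ε * (D + 1) = δ := div_mul_cancel₀ _ (by linarith)
    have hmp : (0:ℝ) ≤ (μp Set.univ).toReal := ENNReal.toReal_nonneg
    have hmn : (0:ℝ) ≤ (μn Set.univ).toReal := ENNReal.toReal_nonneg
    have hb1 : Tsup ξ * (μp Set.univ).toReal ≤ Tsup ξ * (1 + ε) :=
      mul_le_mul_of_nonneg_left (by linarith) (hTsup_nonneg _)
    have hb2 : Tsup (fun i => !ξ i) * (μn Set.univ).toReal ≤ Tsup (fun i => !ξ i) * (1 + ε) :=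
      mul_le_mul_of_nonneg_left (by linarith) (hTsup_nonneg _)
    have hDsum : Tsup ξ * (1 + ε) + Tsup (fun i => !ξ i) * (1 + ε) = D + ε * D := by
      rw [hD]; ring
    have hεD2 : ε * D ≤ δ := by nlinarith
    linarith [hval, hIp, hIn]
  -- identify the RHS suprema
  have hHset : {h : K → ℝ | ∃ g : X, ‖g‖ ≤ 1 ∧ h = ⇑(ι g)}
      = (fun g : X => (⇑(ι g) : K → ℝ)) '' Metric.closedBall (0:X) 1 := by
    ext h
    constructor
    · rintro ⟨g, hg, rfl⟩
      exact ⟨g, mem_closedBall_zero_iff.2 hg, rfl⟩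
    · rintro ⟨g, hg, rfl⟩
      exact ⟨g, mem_closedBall_zero_iff.1 hg, rfl⟩
  have hsg : ∀ b : Bool, (if b then (1:ℝ) else -1) = sg b := fun b => rfl
  have hRHS : ∀ ξ : Fin N → Bool,
      (⨆ h ∈ {h : K → ℝ | ∃ g : X, ‖g‖ ≤ 1 ∧ h = ⇑(ι g)},
        ((cN * ∑ i, sg (ξ i) * h (S i) : ℝ) : EReal)) = ((Rsup ξ : ℝ) : EReal) := by
    intro ξ
    rw [hHset, iSup_image]
    have hcomp : (fun g : X => cN * ∑ i, sg (ξ i) * (ι g (S i)))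
        = (fun t : Fin N → ℝ => ∑ i, sg (ξ i) * t i) ∘ (fun g : X => fun i => cN * ι g (S i)) := by
      funext g
      simp only [Function.comp]
      rw [Finset.mul_sum]
      exact Finset.sum_congr rfl fun i _ => by ring
    have := ereal_biSup_eq (Metric.closedBall (0:X) 1)
      (fun g : X => cN * ∑ i, sg (ξ i) * (ι g (S i)))
      ⟨0, Metric.mem_closedBall_self zero_le_one⟩ ((N : ℝ) * (cN * C₁)) ?_
    · rw [this]
      congr 1
      rw [hcomp, Set.image_comp]
    · intro g hg
      have hmem : (fun i : Fin N => cN * ι g (S i)) ∈ T := ⟨g, hg, rfl⟩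
      have h1 : cN * ∑ i, sg (ξ i) * (ι g (S i)) = ∑ i, sg (ξ i) * (cN * ι g (S i)) := by
        rw [Finset.mul_sum]; exact Finset.sum_congr rfl fun i _ => by ring
      show cN * ∑ i, sg (ξ i) * (ι g (S i)) ≤ (N : ℝ) * (cN * C₁)
      rw [h1]
      calc ∑ i, sg (ξ i) * (cN * ι g (S i)) ≤ ∑ _i : Fin N, cN * C₁ := by
            refine Finset.sum_le_sum fun i _ => ?_
            calc sg (ξ i) * (cN * ι g (S i)) ≤ |sg (ξ i) * (cN * ι g (S i))| := le_abs_self _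
              _ = |cN * ι g (S i)| := by rw [abs_mul, abs_sg, one_mul]
              _ ≤ cN * C₁ := hTbd _ hmem i
        _ = (N : ℝ) * (cN * C₁) := by simp [Finset.sum_const, mul_comm]
  have hFsup : ∀ ξ : Fin N → Bool,
      (⨆ h ∈ {h : K → ℝ | ∃ f : C(K, ℝ), barronNorm K H f ≤ 1 ∧ h = ⇑f},
        ((cN * ∑ i, sg (ξ i) * h (S i) : ℝ) : EReal))
        ≤ ((Tsup ξ + Tsup (fun i => !ξ i) : ℝ) : EReal) := by
    intro ξ
    refine iSup₂_le fun h hh => ?_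
    obtain ⟨f, hf, rfl⟩ := hh
    exact EReal.coe_le_coe_iff.2 (keybound ξ f hf)
  -- assemble
  rw [rademacher, rademacher]
  simp only [hsg, ← hcNdef]
  have hsum1 : (∑ ξ : Fin N → Bool,
        ⨆ h ∈ {h : K → ℝ | ∃ g : X, ‖g‖ ≤ 1 ∧ h = ⇑(ι g)},
        ((cN * ∑ i, sg (ξ i) * h (S i) : ℝ) : EReal))
      = ((∑ ξ : Fin N → Bool, Rsup ξ : ℝ) : EReal) := by
    rw [ereal_coe_sum]
    exact Finset.sum_congr rfl fun ξ _ => hRHS ξ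
  have hsum2 : (∑ ξ : Fin N → Bool,
        ⨆ h ∈ {h : K → ℝ | ∃ f : C(K, ℝ), barronNorm K H f ≤ 1 ∧ h = ⇑f},
        ((cN * ∑ i, sg (ξ i) * h (S i) : ℝ) : EReal))
      ≤ ((∑ ξ : Fin N → Bool, (Tsup ξ + Tsup (fun i => !ξ i)) : ℝ) : EReal) := by
    rw [ereal_coe_sum]
    exact Finset.sum_le_sum fun ξ _ => hFsup ξ
  rw [hsum1]
  have hc2 : (0 : EReal) ≤ (((2 ^ N : ℝ)⁻¹ : ℝ) : EReal) := by
    rw [← EReal.coe_zero]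
    exact EReal.coe_le_coe_iff.2 (by positivity)
  have hreal : (2 ^ N : ℝ)⁻¹ * (∑ ξ : Fin N → Bool, (Tsup ξ + Tsup (fun i => !ξ i)))
      ≤ 2 * ((2 ^ N : ℝ)⁻¹ * ∑ ξ : Fin N → Bool, Rsup ξ) := by
    have hflip : ∑ ξ : Fin N → Bool, Tsup (fun i => !ξ i) = ∑ ξ : Fin N → Bool, Tsup ξ := by
      have hinv : Function.Involutive (fun ξ : Fin N → Bool => fun i => !ξ i) := by
        intro ξ; funext i; simp
      exact Fintype.sum_bijective _ hinv.bijective _ _ (fun ξ => rfl)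
    have hcontr : ∑ ξ : Fin N → Bool, Tsup ξ ≤ ∑ ξ : Fin N → Bool, Rsup ξ := by
      simp only [hTsup, hRsup]
      exact contraction T hTne (cN * C₁) hTbd
    have hsplit : ∑ ξ : Fin N → Bool, (Tsup ξ + Tsup (fun i => !ξ i))
        = 2 * ∑ ξ : Fin N → Bool, Tsup ξ := by
      rw [Finset.sum_add_distrib, hflip]; ring
    have hpow : (0:ℝ) ≤ (2 ^ N : ℝ)⁻¹ := by positivity
    rw [hsplit]
    nlinarith [mul_le_mul_of_nonneg_left hcontr hpow]
  calc (((2 ^ N : ℝ)⁻¹ : ℝ) : EReal) * (∑ ξ : Fin N → Bool,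
        ⨆ h ∈ {h : K → ℝ | ∃ f : C(K, ℝ), barronNorm K H f ≤ 1 ∧ h = ⇑f},
        ((cN * ∑ i, sg (ξ i) * h (S i) : ℝ) : EReal))
      ≤ (((2 ^ N : ℝ)⁻¹ : ℝ) : EReal)
        * ((∑ ξ : Fin N → Bool, (Tsup ξ + Tsup (fun i => !ξ i)) : ℝ) : EReal) :=
        mul_le_mul_of_nonneg_left hsum2 hc2
    _ = (((2 ^ N : ℝ)⁻¹ * ∑ ξ : Fin N → Bool, (Tsup ξ + Tsup (fun i => !ξ i)) : ℝ) : EReal) :=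
        (EReal.coe_mul _ _).symm
    _ ≤ ((2 * ((2 ^ N : ℝ)⁻¹ * ∑ ξ : Fin N → Bool, Rsup ξ) : ℝ) : EReal) :=
        EReal.coe_le_coe_iff.2 hreal
    _ = ((2 : ℝ) : EReal) * ((((2 ^ N : ℝ)⁻¹ * ∑ ξ : Fin N → Bool, Rsup ξ : ℝ)) : EReal) :=
        EReal.coe_mul _ _
    _ = ((2 : ℝ) : EReal) * ((((2 ^ N : ℝ)⁻¹ : ℝ)) : EReal)
        * ((∑ ξ : Fin N → Bool, Rsup ξ : ℝ) : EReal) := by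
        rw [EReal.coe_mul, mul_assoc]
    _ = ((2 : ℝ) : EReal) * ((((2 ^ N : ℝ)⁻¹ : ℝ) : EReal)
        * ((∑ ξ : Fin N → Bool, Rsup ξ : ℝ) : EReal)) := by
        rw [mul_assoc]
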